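/- arXiv:1804.10576 — 2 statements merged into one kernel-verified Lean document; each statement's English description precedes it below -/
import Mathlib

section
/- Let $\nu(x)=\sum_{p=1}^{p_0}\gamma_p^2 x^p$ be a finite mixture and regard $F_{N,\beta}(H_{N,\nu}(\cdot),m,\rho)$ as a function of the array $\mathbf{J}=(J^{(p)}_{i_1,\dots,i_p})$ of disorder coefficients. Then this function is Lipschitz continuous (from Euclidean space to $\mathbb{R}$) with Lipschitz constant at most $\beta\sqrt{\frac{\nu(1)}{N}\big(\frac1m+\rho\frac{m-1}{m}\big)}$. -/
open MeasureTheory Real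

/-- The index set of the disorder coefficients: a degree `p.1 + 1 ∈ {1,…,p₀}` together
with a tuple `(i₁,…,i_p)`. -/
abbrev DisorderIndex (N p₀ : ℕ) := (p : Fin p₀) × (Fin (p.1 + 1) → Fin N)

/-- The mixed `p`-spin Hamiltonian `H_{N,ν}(J, σ)` for the finite mixture
`ν(x) = ∑_{p=1}^{p₀} γ_p² x^p`. -/
noncomputable def Hmix (N p₀ : ℕ) (γ : ℕ → ℝ) (J : DisorderIndex N p₀ → ℝ)
    (σ : Fin N → ℝ) : ℝ :=
  ∑ p : Fin p₀, γ (p.1 + 1) * (N : ℝ) ^ (-(p.1 : ℝ) / 2) *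
    ∑ iv : Fin (p.1 + 1) → Fin N, J ⟨p, iv⟩ * ∏ k, σ (iv k)

/-- The constraint set `T_N(m,ρ)`, for configurations on the sphere of radius `√N`. -/
def TNf (N m : ℕ) (ρ : ℝ) : Set (Fin m → (Fin N → ℝ)) :=
  {σ | (∀ i, ∑ k, (σ i k) ^ 2 = (N : ℝ)) ∧
    ∀ i j, i ≠ j → |(∑ k, σ i k * σ j k) / N| < ρ}

/-- Constrained free energy of the mixed Hamiltonian, as a function of the
disorder coefficients `J`. -/
noncomputable def freeEnergyJ (N p₀ m : ℕ) (β ρ : ℝ) (γ : ℕ → ℝ)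
    (μ : Measure (Fin N → ℝ)) [SigmaFinite μ] (J : DisorderIndex N p₀ → ℝ) : ℝ :=
  (1 / ((m : ℝ) * N)) * Real.log
    (∫ σ in TNf N m ρ, Real.exp (-β * ∑ i, Hmix N p₀ γ J (σ i))
      ∂(Measure.pi fun _ : Fin m => μ))

/-- Pull the sum over `i` inside: the difference of total energies is a linear
functional of `J - J'`. -/
lemma sum_Hmix_sub (N p₀ m : ℕ) (γ : ℕ → ℝ) (J J' : DisorderIndex N p₀ → ℝ)
    (σ : Fin m → Fin N → ℝ) :
    ∑ i, (Hmix N p₀ γ J (σ i) - Hmix N p₀ γ J' (σ i))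
      = ∑ x : DisorderIndex N p₀, (J x - J' x) *
          (γ (x.1.1 + 1) * (N : ℝ) ^ (-(x.1.1 : ℝ) / 2) * ∑ i, ∏ k, σ i (x.2 k)) := by
  rw [← Finset.univ_sigma_univ, Finset.sum_sigma]
  simp only [Hmix, ← Finset.sum_sub_distrib, ← mul_sub, ← sub_mul, Finset.mul_sum]
  rw [Finset.sum_comm]
  refine Finset.sum_congr rfl fun p _ => ?_
  rw [Finset.sum_comm]
  refine Finset.sum_congr rfl fun iv _ => ?_
  refine Finset.sum_congr rfl fun i _ => ?_
  ring

lemma pow_eq_sum_prod (n N : ℕ) (h : Fin N → ℝ) :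
    (∑ l, h l) ^ n = ∑ iv : Fin n → Fin N, ∏ k : Fin n, h (iv k) := by
  rw [← Fintype.piFinset_univ, ← Finset.prod_univ_sum]
  simp

/-- On `TNf`, the squared `L²` norm of the coefficient array is at most
`(∑ γ²) · N · (m + m(m-1)ρ)`. -/
lemma coeff_sq_bound (N p₀ m : ℕ) (hN : 0 < N) (ρ : ℝ) (hρ : 0 < ρ) (γ : ℕ → ℝ)
    (σ : Fin m → Fin N → ℝ) (hσ : σ ∈ TNf N m ρ) :
    ∑ x : DisorderIndex N p₀,
        (γ (x.1.1 + 1) * (N : ℝ) ^ (-(x.1.1 : ℝ) / 2) * ∑ i, ∏ k, σ i (x.2 k)) ^ 2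
      ≤ (∑ p : Fin p₀, (γ (p.1 + 1)) ^ 2) *
          ((N : ℝ) * ((m : ℝ) + (m : ℝ) * ((m : ℝ) - 1) * ρ)) := by
  obtain ⟨hsph, hover⟩ := hσ
  have hNpos : (0:ℝ) < N := by exact_mod_cast hN
  rw [← Finset.univ_sigma_univ, Finset.sum_sigma]
  rw [Finset.sum_mul]
  refine Finset.sum_le_sum fun p _ => ?_
  -- inner sum over iv
  have key : ∑ iv : Fin (p.1+1) → Fin N, (∑ i, ∏ k, σ i (iv k))^2
      = ∑ i : Fin m, ∑ j : Fin m, (∑ k, σ i k * σ j k)^(p.1+1) := by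
    have : ∀ iv : Fin (p.1+1) → Fin N, (∑ i, ∏ k, σ i (iv k))^2
        = ∑ i : Fin m, ∑ j : Fin m, ∏ k, (σ i (iv k) * σ j (iv k)) := by
      intro iv
      rw [sq, Finset.sum_mul_sum]
      exact Finset.sum_congr rfl fun i _ => Finset.sum_congr rfl fun j _ =>
        (Finset.prod_mul_distrib).symm
    simp only [this]
    rw [Finset.sum_comm]
    refine Finset.sum_congr rfl fun i _ => ?_
    rw [Finset.sum_comm]
    refine Finset.sum_congr rfl fun j _ => ?_
    exact (pow_eq_sum_prod (p.1+1) N (fun l => σ i l * σ j l)).symm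
  have hite : ∑ i : Fin m, ∑ j : Fin m, (if i = j then (1:ℝ) else ρ)
      = (m:ℝ) + (m:ℝ) * ((m:ℝ) - 1) * ρ := by
    have h1 : ∀ i : Fin m, ∑ j : Fin m, (if i = j then (1:ℝ) else ρ)
        = (m:ℝ) * ρ + (1 - ρ) := by
      intro i
      have h2 : ∀ j : Fin m, (if i = j then (1:ℝ) else ρ)
          = ρ + (if i = j then 1 - ρ else 0) := by intro j; split <;> ring
      simp only [h2, Finset.sum_add_distrib, Finset.sum_const, Finset.card_univ,
        Fintype.card_fin, nsmul_eq_mul, Finset.sum_ite_eq, Finset.mem_univ, if_pos]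
    simp only [h1, Finset.sum_const, Finset.card_univ, Fintype.card_fin, nsmul_eq_mul]
    ring
  have hinner : ∀ i j : Fin m, (∑ k, σ i k * σ j k)^(p.1+1)
      ≤ (N:ℝ)^(p.1+1) * (if i = j then 1 else ρ) := by
    intro i j
    by_cases hij : i = j
    · subst hij
      simp only [if_pos rfl, mul_one]
      have : ∑ k, σ i k * σ i k = (N:ℝ) := by
        rw [← hsph i]; exact Finset.sum_congr rfl fun k _ => (sq (σ i k)).symm
      rw [this]; simp
    · simp only [if_neg hij]
      have habs : |∑ k, σ i k * σ j k| ≤ (N:ℝ) := by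
        have h0 := Finset.sum_mul_sq_le_sq_mul_sq Finset.univ (σ i) (σ j)
        rw [hsph i, hsph j] at h0
        have h2 : (∑ k, σ i k * σ j k)^2 ≤ ((N:ℝ))^2 := by nlinarith [h0]
        exact abs_le_of_sq_le_sq h2 (le_of_lt hNpos)
      have hlt : |∑ k, σ i k * σ j k| ≤ ρ * N := by
        have := hover i j hij
        rw [abs_div, abs_of_pos hNpos] at this
        have := (div_lt_iff₀ hNpos).mp this
        linarith
      calc (∑ k, σ i k * σ j k)^(p.1+1) ≤ |∑ k, σ i k * σ j k|^(p.1+1) := by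
            rw [← abs_pow]; exact le_abs_self _
        _ = |∑ k, σ i k * σ j k|^(p.1) * |∑ k, σ i k * σ j k| := by rw [pow_succ]
        _ ≤ (N:ℝ)^(p.1) * (ρ * N) := by
            apply mul_le_mul (pow_le_pow_left₀ (abs_nonneg _) habs _) hlt (abs_nonneg _)
            positivity
        _ = (N:ℝ)^(p.1+1) * ρ := by ring
  have hc2 : ((N:ℝ) ^ (-(p.1:ℝ)/2))^2 * (N:ℝ)^(p.1+1) = (N:ℝ) := by
    rw [← Real.rpow_natCast ((N:ℝ) ^ (-(p.1:ℝ)/2)) 2, ← Real.rpow_mul (le_of_lt hNpos),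
      ← Real.rpow_natCast (N:ℝ) (p.1+1), ← Real.rpow_add hNpos]
    rw [show -(p.1:ℝ)/2*((2:ℕ):ℝ) + ((p.1:ℕ)+1 : ℕ) = 1 by push_cast; ring, Real.rpow_one]
  calc ∑ iv : Fin (p.1+1) → Fin N,
        (γ (p.1 + 1) * (N : ℝ) ^ (-(p.1 : ℝ) / 2) * ∑ i, ∏ k, σ i (iv k)) ^ 2
      = (γ (p.1+1))^2 * ((N:ℝ) ^ (-(p.1:ℝ)/2))^2 *
          ∑ iv : Fin (p.1+1) → Fin N, (∑ i, ∏ k, σ i (iv k))^2 := by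
        rw [Finset.mul_sum]; exact Finset.sum_congr rfl fun iv _ => by ring
    _ = (γ (p.1+1))^2 * ((N:ℝ) ^ (-(p.1:ℝ)/2))^2 *
          ∑ i : Fin m, ∑ j : Fin m, (∑ k, σ i k * σ j k)^(p.1+1) := by rw [key]
    _ ≤ (γ (p.1+1))^2 * ((N:ℝ) ^ (-(p.1:ℝ)/2))^2 *
          ((N:ℝ)^(p.1+1) * ((m:ℝ) + (m:ℝ) * ((m:ℝ) - 1) * ρ)) := by
        apply mul_le_mul_of_nonneg_left _ (by positivity)
        calc ∑ i : Fin m, ∑ j : Fin m, (∑ k, σ i k * σ j k)^(p.1+1)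
            ≤ ∑ i : Fin m, ∑ j : Fin m, (N:ℝ)^(p.1+1) * (if i = j then 1 else ρ) :=
              Finset.sum_le_sum fun i _ => Finset.sum_le_sum fun j _ => hinner i j
          _ = (N:ℝ)^(p.1+1) * ((m:ℝ) + (m:ℝ) * ((m:ℝ) - 1) * ρ) := by
              simp only [← Finset.mul_sum]; rw [hite]
    _ = (γ (p.1+1))^2 * ((N:ℝ) * ((m:ℝ) + (m:ℝ) * ((m:ℝ) - 1) * ρ)) := by
        rw [show ∀ a b c d : ℝ, a * b * (c * d) = a * ((b * c) * d) from fun _ _ _ _ => by ring,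
          hc2]
        try ring

lemma TNf_measurable (N m : ℕ) (ρ : ℝ) : MeasurableSet (TNf N m ρ) := by
  have h1 : MeasurableSet {σ : Fin m → Fin N → ℝ | ∀ i, ∑ k, (σ i k)^2 = (N:ℝ)} := by
    rw [Set.setOf_forall]
    exact MeasurableSet.iInter fun i =>
      measurableSet_eq_fun (by fun_prop) measurable_const
  have h2 : MeasurableSet
      {σ : Fin m → Fin N → ℝ | ∀ i j, i ≠ j → |(∑ k, σ i k * σ j k)/N| < ρ} := by
    rw [Set.setOf_forall]
    refine MeasurableSet.iInter fun i => ?_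
    rw [Set.setOf_forall]
    refine MeasurableSet.iInter fun j => ?_
    by_cases hij : i = j
    · simp [hij]
    · simp only [hij, ne_eq, not_false_iff, true_implies]
      exact measurableSet_lt (by fun_prop) measurable_const
  have : TNf N m ρ = {σ : Fin m → Fin N → ℝ | ∀ i, ∑ k, (σ i k)^2 = (N:ℝ)} ∩
      {σ : Fin m → Fin N → ℝ | ∀ i j, i ≠ j → |(∑ k, σ i k * σ j k)/N| < ρ} := by
    ext σ; simp [TNf, Set.mem_setOf_eq, Set.mem_inter_iff]
  rw [this]; exact h1.inter h2

/-- `F_{N,β}(H_{N,ν}(J,·), m, ρ)` is a Lipschitz function of the disorder array `J`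
(with the Euclidean `L²` norm on the space of arrays), with Lipschitz constant
`β √( ν(1)/N · (1/m + ρ(m-1)/m) )`, where `ν(1) = ∑_{p=1}^{p₀} γ_p²`. -/
theorem statement3 (N p₀ m : ℕ) (hN : 0 < N) (hp₀ : 0 < p₀) (hm : 0 < m)
    (β ρ : ℝ) (hβ : 0 < β) (hρ : 0 < ρ) (γ : ℕ → ℝ)
    (μ : Measure (Fin N → ℝ)) [IsProbabilityMeasure μ]
    (hsupp : ∀ᵐ σ ∂μ, ∑ k, (σ k) ^ 2 = (N : ℝ))
    (hT : (Measure.pi fun _ : Fin m => μ) (TNf N m ρ) ≠ 0)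
    (hint : ∀ J : DisorderIndex N p₀ → ℝ,
      IntegrableOn (fun σ : Fin m → (Fin N → ℝ) =>
        Real.exp (-β * ∑ i, Hmix N p₀ γ J (σ i))) (TNf N m ρ)
        (Measure.pi fun _ : Fin m => μ)) :
    ∀ J J' : DisorderIndex N p₀ → ℝ,
      |freeEnergyJ N p₀ m β ρ γ μ J - freeEnergyJ N p₀ m β ρ γ μ J'|
        ≤ β * Real.sqrt ((∑ p : Fin p₀, (γ (p.1 + 1)) ^ 2) / N *
            (1 / m + ρ * ((m : ℝ) - 1) / m))
          * Real.sqrt (∑ x : DisorderIndex N p₀, (J x - J' x) ^ 2) := by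
  set Pm := Measure.pi fun _ : Fin m => μ with hPmdef
  set T := TNf N m ρ with hTdef
  set B : ℝ := (∑ p : Fin p₀, (γ (p.1 + 1)) ^ 2) *
    ((N : ℝ) * ((m : ℝ) + (m : ℝ) * ((m : ℝ) - 1) * ρ)) with hB
  have hNpos : (0:ℝ) < N := by exact_mod_cast hN
  have hmpos : (0:ℝ) < m := by exact_mod_cast hm
  have hm1 : (1:ℝ) ≤ (m:ℝ) := by exact_mod_cast hm
  have hmeas := TNf_measurable N m ρ
  have hBnn : 0 ≤ B := by
    rw [hB]
    apply mul_nonneg (Finset.sum_nonneg fun _ _ => sq_nonneg _)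
    apply mul_nonneg hNpos.le
    have h0 : 0 ≤ (m:ℝ)*((m:ℝ)-1)*ρ := mul_nonneg (mul_nonneg hmpos.le (by linarith)) hρ.le
    linarith
  -- positivity of the partition function
  have hpos : ∀ J : DisorderIndex N p₀ → ℝ,
      0 < ∫ σ in T, Real.exp (-β * ∑ i, Hmix N p₀ γ J (σ i)) ∂Pm := by
    intro J
    rw [setIntegral_pos_iff_support_of_nonneg_ae
      (Filter.Eventually.of_forall fun σ => Real.exp_nonneg _) (hint J)]
    have hs : (Function.support fun σ : Fin m → Fin N → ℝ =>
        Real.exp (-β * ∑ i, Hmix N p₀ γ J (σ i))) = Set.univ :=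
      Set.eq_univ_of_forall fun σ => (Real.exp_pos _).ne'
    rw [hs, Set.univ_inter]
    exact pos_iff_ne_zero.mpr hT
  -- one-sided bound
  have hone : ∀ J J' : DisorderIndex N p₀ → ℝ,
      Real.log (∫ σ in T, Real.exp (-β * ∑ i, Hmix N p₀ γ J (σ i)) ∂Pm)
        - Real.log (∫ σ in T, Real.exp (-β * ∑ i, Hmix N p₀ γ J' (σ i)) ∂Pm)
        ≤ β * Real.sqrt (∑ x : DisorderIndex N p₀, (J x - J' x) ^ 2) * Real.sqrt B := by
    intro J J'
    set D := Real.sqrt (∑ x : DisorderIndex N p₀, (J x - J' x) ^ 2) with hD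
    set K := β * D * Real.sqrt B with hK
    have hptw : ∀ σ ∈ T, Real.exp (-β * ∑ i, Hmix N p₀ γ J (σ i))
        ≤ Real.exp K * Real.exp (-β * ∑ i, Hmix N p₀ γ J' (σ i)) := by
      intro σ hσ
      rw [← Real.exp_add]
      apply Real.exp_le_exp.mpr
      have hdiff : |∑ i, (Hmix N p₀ γ J (σ i) - Hmix N p₀ γ J' (σ i))|
          ≤ D * Real.sqrt B := by
        rw [sum_Hmix_sub]
        set g : DisorderIndex N p₀ → ℝ := fun x =>
          γ (x.1.1 + 1) * (N : ℝ) ^ (-(x.1.1 : ℝ) / 2) * ∑ i, ∏ k, σ i (x.2 k) with hg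
        have hCS := Real.sum_mul_le_sqrt_mul_sqrt Finset.univ
          (fun x : DisorderIndex N p₀ => J x - J' x) g
        have hCS' := Real.sum_mul_le_sqrt_mul_sqrt Finset.univ
          (fun x : DisorderIndex N p₀ => -(J x - J' x)) g
        simp only [neg_sq] at hCS'
        have hgB : Real.sqrt (∑ x : DisorderIndex N p₀, g x ^ 2) ≤ Real.sqrt B :=
          Real.sqrt_le_sqrt (coeff_sq_bound N p₀ m hN ρ hρ γ σ hσ)
        have hDB : D * Real.sqrt (∑ x : DisorderIndex N p₀, g x ^ 2) ≤ D * Real.sqrt B :=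
          mul_le_mul_of_nonneg_left hgB (Real.sqrt_nonneg _)
        rw [abs_le]
        constructor
        · have hneg : -(∑ x : DisorderIndex N p₀, (J x - J' x) * g x)
              = ∑ x : DisorderIndex N p₀, -(J x - J' x) * g x := by
            rw [← Finset.sum_neg_distrib]
            exact Finset.sum_congr rfl fun x _ => by ring
          rw [neg_le, hneg]
          exact hCS'.trans hDB
        · exact hCS.trans hDB
      have h2 : -β * ∑ i, (Hmix N p₀ γ J (σ i) - Hmix N p₀ γ J' (σ i)) ≤ K := by
        have hstep : -(∑ i, (Hmix N p₀ γ J (σ i) - Hmix N p₀ γ J' (σ i)))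
            ≤ |∑ i, (Hmix N p₀ γ J (σ i) - Hmix N p₀ γ J' (σ i))| := neg_le_abs _
        calc -β * ∑ i, (Hmix N p₀ γ J (σ i) - Hmix N p₀ γ J' (σ i))
            = β * -(∑ i, (Hmix N p₀ γ J (σ i) - Hmix N p₀ γ J' (σ i))) := by ring
          _ ≤ β * |∑ i, (Hmix N p₀ γ J (σ i) - Hmix N p₀ γ J' (σ i))| :=
              mul_le_mul_of_nonneg_left hstep hβ.le
          _ ≤ β * (D * Real.sqrt B) := mul_le_mul_of_nonneg_left hdiff hβ.le
          _ = K := by rw [hK]; ring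
      have h1 : -β * ∑ i, Hmix N p₀ γ J (σ i)
          = -β * ∑ i, (Hmix N p₀ γ J (σ i) - Hmix N p₀ γ J' (σ i))
            + -β * ∑ i, Hmix N p₀ γ J' (σ i) := by
        rw [Finset.sum_sub_distrib]; ring
      rw [h1]
      linarith
    have hmono : (∫ σ in T, Real.exp (-β * ∑ i, Hmix N p₀ γ J (σ i)) ∂Pm)
        ≤ Real.exp K * ∫ σ in T, Real.exp (-β * ∑ i, Hmix N p₀ γ J' (σ i)) ∂Pm := by
      rw [← MeasureTheory.integral_const_mul]
      exact setIntegral_mono_on (hint J) ((hint J').const_mul _) hmeas hptw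
    have hlog : Real.log (∫ σ in T, Real.exp (-β * ∑ i, Hmix N p₀ γ J (σ i)) ∂Pm)
        ≤ K + Real.log (∫ σ in T, Real.exp (-β * ∑ i, Hmix N p₀ γ J' (σ i)) ∂Pm) := by
      calc Real.log (∫ σ in T, Real.exp (-β * ∑ i, Hmix N p₀ γ J (σ i)) ∂Pm)
          ≤ Real.log (Real.exp K *
              ∫ σ in T, Real.exp (-β * ∑ i, Hmix N p₀ γ J' (σ i)) ∂Pm) :=
            Real.log_le_log (hpos J) hmono
        _ = K + Real.log (∫ σ in T, Real.exp (-β * ∑ i, Hmix N p₀ γ J' (σ i)) ∂Pm) := by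
            rw [Real.log_mul (Real.exp_ne_zero _) (hpos J').ne', Real.log_exp]
    rw [hK]; linarith
  intro J J'
  set D := Real.sqrt (∑ x : DisorderIndex N p₀, (J x - J' x) ^ 2) with hD
  have hsym : Real.sqrt (∑ x : DisorderIndex N p₀, (J' x - J x) ^ 2) = D := by
    rw [hD]
    congr 1
    exact Finset.sum_congr rfl fun x _ => by ring
  have habs : |Real.log (∫ σ in T, Real.exp (-β * ∑ i, Hmix N p₀ γ J (σ i)) ∂Pm)
      - Real.log (∫ σ in T, Real.exp (-β * ∑ i, Hmix N p₀ γ J' (σ i)) ∂Pm)|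
      ≤ β * D * Real.sqrt B := by
    rw [abs_sub_le_iff]
    refine ⟨hone J J', ?_⟩
    have := hone J' J
    rw [hsym] at this
    exact this
  have hF : freeEnergyJ N p₀ m β ρ γ μ J - freeEnergyJ N p₀ m β ρ γ μ J'
      = (1 / ((m:ℝ) * N)) *
        (Real.log (∫ σ in T, Real.exp (-β * ∑ i, Hmix N p₀ γ J (σ i)) ∂Pm)
          - Real.log (∫ σ in T, Real.exp (-β * ∑ i, Hmix N p₀ γ J' (σ i)) ∂Pm)) := by
    rw [freeEnergyJ, freeEnergyJ]; ring
  have hcoef : (1 / ((m:ℝ) * N)) * (β * D * Real.sqrt B)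
      = β * Real.sqrt ((∑ p : Fin p₀, (γ (p.1 + 1)) ^ 2) / N *
          (1 / m + ρ * ((m : ℝ) - 1) / m)) * D := by
    have harg : (∑ p : Fin p₀, (γ (p.1 + 1)) ^ 2) / N *
        (1 / m + ρ * ((m : ℝ) - 1) / m) = B / ((m:ℝ) * N)^2 := by
      rw [hB]
      field_simp
    rw [harg, Real.sqrt_div hBnn, Real.sqrt_sq (by positivity)]
    field_simp
  calc |freeEnergyJ N p₀ m β ρ γ μ J - freeEnergyJ N p₀ m β ρ γ μ J'|
      = (1 / ((m:ℝ) * N)) *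
        |Real.log (∫ σ in T, Real.exp (-β * ∑ i, Hmix N p₀ γ J (σ i)) ∂Pm)
          - Real.log (∫ σ in T, Real.exp (-β * ∑ i, Hmix N p₀ γ J' (σ i)) ∂Pm)| := by
        rw [hF, abs_mul, abs_of_pos (by positivity)]
    _ ≤ (1 / ((m:ℝ) * N)) * (β * D * Real.sqrt B) :=
        mul_le_mul_of_nonneg_left habs (by positivity)
    _ = _ := hcoef
end

section
/- Let $q_\star,q_\star'\in(0,1]$ and $q\in[-1,1]$. Let $\sigma_0,\sigma_0'\in\mathbb{R}^N$ with $\|\sigma_0\|^2=Nq_\star$, $\|\sigma_0'\|^2=Nq_\star'$, and let $\sigma_1,\dots,\sigma_m$ and $\sigma_1',\dots,\sigma_m'$ be vectors with $\|\sigma_i\|^2=\|\sigma_i'\|^2=N$ such that $|\langle\sigma_i-\sigma_0,\sigma_j-\sigma_0\rangle|/N\le \epsilon$ and $|\langle\sigma_i'-\sigma_0',\sigma_j'-\sigma_0'\rangle|/N\le\epsilon$ for all $i\ne j$. If $i,j$ are chosen independently and uniformly from $\{1,\dots,m\}$, then with probability at least $1-3\lceil\sqrt m\rceil/m$ over the choice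 of $(i,j)$, $\big|\langle\sigma_i,\sigma_j'\rangle/N - \langle\sigma_0,\sigma_0'\rangle/N\big| \le 3(m^{-1/4}C + \sqrt\epsilon\, C')$ for constants $C,C'$ depending only on the norm bounds (e.g. $C,C'\le 4$). -/
open Finset

local notation "⟪" x ", " y "⟫" => @inner ℝ _ _ x y

lemma key_count {N m : ℕ} (hN : 0 < N) (v : Fin m → EuclideanSpace ℝ (Fin N))
    (w : EuclideanSpace ℝ (Fin N)) (ε R r t : ℝ) (hε : 0 ≤ ε) (hR : 0 < R) (hr : 0 < r)
    (hv : ∀ i, ‖v i‖ ^ 2 ≤ R * N)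
    (horth : ∀ i j, i ≠ j → |⟪v i, v j⟫| ≤ ε * N)
    (hw : ‖w‖ ^ 2 ≤ r ^ 2 * N) (k : ℕ) (hk : 0 < k)
    (ht : r ^ 2 * ε + r ^ 2 * R / k ≤ t ^ 2) (ht0 : 0 ≤ t) :
    (Finset.univ.filter fun i => t * N < |⟪v i, w⟫|).card ≤ k := by
  classical
  set S := Finset.univ.filter fun i => t * N < |⟪v i, w⟫| with hSdef
  by_cases hc0 : S.card = 0
  · omega
  have hc1 : 0 < S.card := Nat.pos_of_ne_zero hc0
  have hcpos : (0:ℝ) < S.card := by exact_mod_cast hc1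
  have hNpos : (0:ℝ) < N := by exact_mod_cast hN
  have hkpos : (0:ℝ) < k := by exact_mod_cast hk
  set s : Fin m → ℝ := fun i => if 0 ≤ ⟪v i, w⟫ then 1 else -1 with hsdef
  set u : EuclideanSpace ℝ (Fin N) := ∑ i ∈ S, s i • v i with hudef
  have habs : ∀ i, s i * ⟪v i, w⟫ = |⟪v i, w⟫| := by
    intro i
    simp only [hsdef]
    by_cases h : 0 ≤ ⟪v i, w⟫
    · rw [if_pos h, one_mul, abs_of_nonneg h]
    · push_neg at h
      rw [if_neg (not_le.mpr h), abs_of_neg h]; ring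
  have hsabs : ∀ i, |s i| = 1 := by
    intro i
    simp only [hsdef]
    by_cases h : 0 ≤ ⟪v i, w⟫
    · rw [if_pos h]; norm_num
    · rw [if_neg h]; norm_num
  have hiw : ⟪u, w⟫ = ∑ i ∈ S, |⟪v i, w⟫| := by
    rw [hudef, sum_inner]
    exact Finset.sum_congr rfl fun i _ => by rw [real_inner_smul_left, habs]
  have h1 : (S.card : ℝ) * (t * N) ≤ ⟪u, w⟫ := by
    rw [hiw]
    have := Finset.card_nsmul_le_sum S (fun i => |⟪v i, w⟫|) (t * N)
      (fun i hi => le_of_lt (by simpa [hSdef] using (Finset.mem_filter.mp hi).2))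
    simpa [nsmul_eq_mul] using this
  have hnormu : ‖u‖ ^ 2 = ∑ i ∈ S, ∑ j ∈ S, s i * s j * ⟪v i, v j⟫ := by
    rw [← real_inner_self_eq_norm_sq, hudef, sum_inner]
    refine Finset.sum_congr rfl fun i _ => ?_
    rw [inner_sum]
    refine Finset.sum_congr rfl fun j _ => ?_
    rw [real_inner_smul_left, real_inner_smul_right]; ring
  have hb : ∀ i ∈ S, ∀ j ∈ S, s i * s j * ⟪v i, v j⟫ ≤ (if i = j then R * (N:ℝ) else 0) + ε * N := by
    intro i _ j _
    have h1' : s i * s j * ⟪v i, v j⟫ ≤ |⟪v i, v j⟫| := by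
      calc s i * s j * ⟪v i, v j⟫ ≤ |s i * s j * ⟪v i, v j⟫| := le_abs_self _
        _ = |⟪v i, v j⟫| := by rw [abs_mul, abs_mul, hsabs, hsabs]; ring
    by_cases hij : i = j
    · subst hij
      have : |⟪v i, v i⟫| ≤ R * N := by
        rw [real_inner_self_eq_norm_sq, abs_of_nonneg (by positivity)]
        exact hv i
      rw [if_pos rfl]
      nlinarith [mul_nonneg hε hNpos.le]
    · have := horth i j hij
      simp only [if_neg hij]
      linarith
  have hu2 : ‖u‖ ^ 2 ≤ (S.card : ℝ) * (R * N) + (S.card : ℝ) ^ 2 * (ε * N) := by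
    rw [hnormu]
    calc ∑ i ∈ S, ∑ j ∈ S, s i * s j * ⟪v i, v j⟫
        ≤ ∑ i ∈ S, ∑ j ∈ S, ((if i = j then R * (N:ℝ) else 0) + ε * N) :=
          Finset.sum_le_sum fun i hi => Finset.sum_le_sum fun j hj => hb i hi j hj
      _ ≤ ∑ i ∈ S, (R * (N:ℝ) + (S.card : ℝ) * (ε * N)) := by
          refine Finset.sum_le_sum fun i hi => ?_
          rw [Finset.sum_add_distrib, Finset.sum_ite_eq S i (fun _ => R * (N:ℝ)),
            Finset.sum_const, nsmul_eq_mul, if_pos hi]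
      _ = (S.card : ℝ) * (R * N) + (S.card : ℝ) ^ 2 * (ε * N) := by
          rw [Finset.sum_const, nsmul_eq_mul]; ring
  have hCS : ⟪u, w⟫ ≤ ‖u‖ * ‖w‖ := real_inner_le_norm u w
  have h2 : ((S.card : ℝ) * (t * N)) ^ 2
      ≤ ((S.card : ℝ) * (R * N) + (S.card : ℝ) ^ 2 * (ε * N)) * (r ^ 2 * N) := by
    have h0 : (0:ℝ) ≤ (S.card : ℝ) * (t * N) := by positivity
    calc ((S.card : ℝ) * (t * N)) ^ 2 ≤ (‖u‖ * ‖w‖) ^ 2 :=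
          pow_le_pow_left₀ h0 (h1.trans hCS) 2
      _ = ‖u‖ ^ 2 * ‖w‖ ^ 2 := by ring
      _ ≤ ((S.card : ℝ) * (R * N) + (S.card : ℝ) ^ 2 * (ε * N)) * (r ^ 2 * N) :=
          mul_le_mul hu2 hw (sq_nonneg _) (le_trans (sq_nonneg ‖u‖) hu2)
  -- divide: c t² ≤ r² R + c ε r²
  have h3 : (S.card : ℝ) * (t ^ 2 - r ^ 2 * ε) ≤ r ^ 2 * R := by
    nlinarith [h2, mul_pos hcpos (mul_pos hNpos hNpos), sq_nonneg ((S.card : ℝ) * N)]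
  have h4 : r ^ 2 * R ≤ (t ^ 2 - r ^ 2 * ε) * k := by
    rw [← div_le_iff₀ hkpos]
    linarith
  have h5 : 0 < t ^ 2 - r ^ 2 * ε := by
    have : 0 < r ^ 2 * R / k := by positivity
    linarith [div_le_iff₀ hkpos |>.mp (le_refl (r^2*R/k))]
  have h6 : (S.card : ℝ) ≤ k := by
    have := h3.trans h4
    exact le_of_mul_le_mul_right (by linarith [mul_comm (t^2 - r^2*ε) (k:ℝ)]) h5
  exact_mod_cast h6

lemma pairs_card_fst {m k : ℕ} (f : Fin m → Finset (Fin m)) (hf : ∀ j, (f j).card ≤ k)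
    (P : Fin m × Fin m → Prop) [DecidablePred P]
    (hP : ∀ p, P p → p.1 ∈ f p.2) :
    (Finset.univ.filter P).card ≤ m * k := by
  classical
  calc (Finset.univ.filter P).card
      ≤ (Finset.univ.biUnion fun j : Fin m => (f j).image fun i => (i, j)).card := by
        apply Finset.card_le_card
        intro p hp
        simp only [Finset.mem_filter] at hp
        simp only [Finset.mem_biUnion, Finset.mem_image]
        exact ⟨p.2, Finset.mem_univ _, p.1, hP p hp.2, rfl⟩
    _ ≤ ∑ j : Fin m, ((f j).image fun i => (i, j)).card := Finset.card_biUnion_le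
    _ ≤ ∑ _j : Fin m, k := Finset.sum_le_sum fun j _ => (Finset.card_image_le).trans (hf j)
    _ = m * k := by simp [mul_comm]

lemma pairs_card_snd {m k : ℕ} (f : Fin m → Finset (Fin m)) (hf : ∀ i, (f i).card ≤ k)
    (P : Fin m × Fin m → Prop) [DecidablePred P]
    (hP : ∀ p, P p → p.2 ∈ f p.1) :
    (Finset.univ.filter P).card ≤ m * k := by
  classical
  calc (Finset.univ.filter P).card
      ≤ (Finset.univ.biUnion fun i : Fin m => (f i).image fun j => (i, j)).card := by
        apply Finset.card_le_card
        intro p hp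
        simp only [Finset.mem_filter] at hp
        simp only [Finset.mem_biUnion, Finset.mem_image]
        exact ⟨p.1, Finset.mem_univ _, p.2, hP p hp.2, rfl⟩
    _ ≤ ∑ i : Fin m, ((f i).image fun j => (i, j)).card := Finset.card_biUnion_le
    _ ≤ ∑ _i : Fin m, k := Finset.sum_le_sum fun i _ => (Finset.card_image_le).trans (hf i)
    _ = m * k := by simp [mul_comm]

open MeasureTheory Real

set_option maxHeartbeats 1000000 in
/-- Near-orthogonality averaging: if the centered configurations `σ_i - σ₀` (resp.
`σ'_j - σ₀'`) are pairwise nearly orthogonal, then for a uniformly random pair `(i,j)`,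
with probability at least `1 - 3⌈√m⌉/m`, the overlap `⟨σ_i, σ'_j⟩/N` is within
`3(m^{-1/4}C + √ε C')` of `⟨σ₀, σ₀'⟩/N`, for absolute constants `C, C' ≤ 4`. -/
theorem statement14 : ∃ C C' : ℝ, 0 < C ∧ 0 < C' ∧ C ≤ 4 ∧ C' ≤ 4 ∧
    ∀ (N m : ℕ), 0 < N → 0 < m →
    ∀ (qs qs' : ℝ), qs ∈ Set.Ioc (0 : ℝ) 1 → qs' ∈ Set.Ioc (0 : ℝ) 1 →
    ∀ (ε : ℝ), 0 ≤ ε →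
    ∀ (σ₀ σ₀' : EuclideanSpace ℝ (Fin N)),
      ‖σ₀‖ ^ 2 = N * qs → ‖σ₀'‖ ^ 2 = N * qs' →
    ∀ (σ σ' : Fin m → EuclideanSpace ℝ (Fin N)),
      (∀ i, ‖σ i‖ ^ 2 = (N : ℝ)) → (∀ i, ‖σ' i‖ ^ 2 = (N : ℝ)) →
      (∀ i j, i ≠ j → |(inner ℝ (σ i - σ₀) (σ j - σ₀) : ℝ)| / N ≤ ε) →
      (∀ i j, i ≠ j → |(inner ℝ (σ' i - σ₀') (σ' j - σ₀') : ℝ)| / N ≤ ε) →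
      (1 - 3 * (⌈Real.sqrt m⌉₊ : ℝ) / m) * (m : ℝ) ^ 2 ≤
        (Set.ncard {p : Fin m × Fin m |
          |(inner ℝ (σ p.1) (σ' p.2) : ℝ) / N - (inner ℝ σ₀ σ₀' : ℝ) / N|
            ≤ 3 * ((m : ℝ) ^ (-(1 : ℝ) / 4) * C + Real.sqrt ε * C')} : ℝ) := by
  refine ⟨4, 4, by norm_num, by norm_num, le_refl _, le_refl _, ?_⟩
  intro N m hN hm qs qs' hqs hqs' ε hε σ₀ σ₀' h0 h0' σ σ' hσn hσ'n horth horth'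
  classical
  have hNpos : (0:ℝ) < N := by exact_mod_cast hN
  have hmpos : (0:ℝ) < m := by exact_mod_cast hm
  set k := ⌈Real.sqrt m⌉₊ with hkdef
  have hk1 : 0 < k := by
    rw [hkdef]
    exact Nat.ceil_pos.mpr (Real.sqrt_pos.mpr hmpos)
  have hkpos : (0:ℝ) < k := by exact_mod_cast hk1
  set τ : Fin m → EuclideanSpace ℝ (Fin N) := fun i => σ i - σ₀ with hτdef
  set τ' : Fin m → EuclideanSpace ℝ (Fin N) := fun j => σ' j - σ₀' with hτ'def
  set sk := Real.sqrt k with hskdef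
  set se := Real.sqrt ε with hsedef
  have hskpos : 0 < sk := Real.sqrt_pos.mpr hkpos
  have hse0 : 0 ≤ se := Real.sqrt_nonneg _
  have hsk2 : sk ^ 2 = k := Real.sq_sqrt hkpos.le
  have hse2 : se ^ 2 = ε := Real.sq_sqrt hε
  set t1 : ℝ := se + 2 / sk with ht1def
  set t2 : ℝ := 2 * se + 4 / sk with ht2def
  have ht10 : 0 ≤ t1 := by positivity
  have ht20 : 0 ≤ t2 := by positivity
  -- norm bounds on the centered vectors
  have hnσ : ∀ i, ‖σ i‖ = Real.sqrt N := fun i => by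
    rw [← Real.sqrt_sq (norm_nonneg (σ i)), hσn i]
  have hnσ' : ∀ i, ‖σ' i‖ = Real.sqrt N := fun i => by
    rw [← Real.sqrt_sq (norm_nonneg (σ' i)), hσ'n i]
  have h0le : ‖σ₀‖ ≤ Real.sqrt N := by
    rw [← Real.sqrt_sq (norm_nonneg σ₀), h0]
    exact Real.sqrt_le_sqrt (by nlinarith [hqs.2])
  have h0'le : ‖σ₀'‖ ≤ Real.sqrt N := by
    rw [← Real.sqrt_sq (norm_nonneg σ₀'), h0']
    exact Real.sqrt_le_sqrt (by nlinarith [hqs'.2])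
  have hτb : ∀ i, ‖τ i‖ ^ 2 ≤ (4:ℝ) * N := by
    intro i
    have h : ‖τ i‖ ≤ 2 * Real.sqrt N := by
      calc ‖τ i‖ ≤ ‖σ i‖ + ‖σ₀‖ := norm_sub_le _ _
        _ ≤ Real.sqrt N + Real.sqrt N := by rw [hnσ i]; linarith
        _ = 2 * Real.sqrt N := by ring
    calc ‖τ i‖ ^ 2 ≤ (2 * Real.sqrt N) ^ 2 := by
          exact pow_le_pow_left₀ (norm_nonneg _) h 2
      _ = (4:ℝ) * N := by rw [mul_pow, Real.sq_sqrt hNpos.le]; ring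
  have hτ'b : ∀ i, ‖τ' i‖ ^ 2 ≤ (4:ℝ) * N := by
    intro i
    have h : ‖τ' i‖ ≤ 2 * Real.sqrt N := by
      calc ‖τ' i‖ ≤ ‖σ' i‖ + ‖σ₀'‖ := norm_sub_le _ _
        _ ≤ Real.sqrt N + Real.sqrt N := by rw [hnσ' i]; linarith
        _ = 2 * Real.sqrt N := by ring
    calc ‖τ' i‖ ^ 2 ≤ (2 * Real.sqrt N) ^ 2 := by
          exact pow_le_pow_left₀ (norm_nonneg _) h 2
      _ = (4:ℝ) * N := by rw [mul_pow, Real.sq_sqrt hNpos.le]; ring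
  have horthτ : ∀ i j, i ≠ j → |(inner ℝ (τ i) (τ j) : ℝ)| ≤ ε * N := by
    intro i j hij
    have := horth i j hij
    rw [div_le_iff₀ hNpos] at this
    simpa [hτdef, mul_comm] using this
  have horthτ' : ∀ i j, i ≠ j → |(inner ℝ (τ' i) (τ' j) : ℝ)| ≤ ε * N := by
    intro i j hij
    have := horth' i j hij
    rw [div_le_iff₀ hNpos] at this
    simpa [hτ'def, mul_comm] using this
  -- threshold inequalities
  have hkey1 : (1:ℝ) ^ 2 * ε + (1:ℝ) ^ 2 * 4 / k ≤ t1 ^ 2 := by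
    have hexp : t1 ^ 2 = se ^ 2 + 4 * (se / sk) + 4 / sk ^ 2 := by
      rw [ht1def]; ring
    have hpos : 0 ≤ se / sk := by positivity
    rw [hexp, hse2, ← hsk2]
    linarith
  have hkey2 : (2:ℝ) ^ 2 * ε + (2:ℝ) ^ 2 * 4 / k ≤ t2 ^ 2 := by
    have hexp : t2 ^ 2 = 4 * se ^ 2 + 16 * (se / sk) + 16 / sk ^ 2 := by
      rw [ht2def]; ring
    have hpos : 0 ≤ se / sk := by positivity
    rw [hexp, hse2, ← hsk2]
    linarith
  -- individual counts
  have hw1 : ‖σ₀'‖ ^ 2 ≤ (1:ℝ) ^ 2 * N := by rw [h0']; nlinarith [hqs'.2]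
  have hw2 : ‖σ₀‖ ^ 2 ≤ (1:ℝ) ^ 2 * N := by rw [h0]; nlinarith [hqs.2]
  have hB1 : (Finset.univ.filter fun i => t1 * N < |(inner ℝ (τ i) σ₀' : ℝ)|).card ≤ k :=
    key_count hN τ σ₀' ε 4 1 t1 hε (by norm_num) (by norm_num) hτb horthτ hw1 k hk1 hkey1 ht10
  have hB2 : (Finset.univ.filter fun j => t1 * N < |(inner ℝ (τ' j) σ₀ : ℝ)|).card ≤ k :=
    key_count hN τ' σ₀ ε 4 1 t1 hε (by norm_num) (by norm_num) hτ'b horthτ' hw2 k hk1 hkey1 ht10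
  have hB3 : ∀ j, (Finset.univ.filter fun i => t2 * N < |(inner ℝ (τ i) (τ' j) : ℝ)|).card ≤ k := by
    intro j
    exact key_count hN τ (τ' j) ε 4 2 t2 hε (by norm_num) (by norm_num) hτb horthτ
      (by norm_num; exact hτ'b j) k hk1 hkey2 ht20
  -- pair sets
  set P1 := Finset.univ.filter (fun p : Fin m × Fin m => t1 * N < |(inner ℝ (τ p.1) σ₀' : ℝ)|) with hP1def
  set P2 := Finset.univ.filter (fun p : Fin m × Fin m => t1 * N < |(inner ℝ (τ' p.2) σ₀ : ℝ)|) with hP2def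
  set P3 := Finset.univ.filter (fun p : Fin m × Fin m => t2 * N < |(inner ℝ (τ p.1) (τ' p.2) : ℝ)|) with hP3def
  have hP1c : P1.card ≤ m * k := by
    apply pairs_card_fst (fun _ => Finset.univ.filter fun i => t1 * N < |(inner ℝ (τ i) σ₀' : ℝ)|)
      (fun _ => hB1)
    intro p hp
    simpa using hp
  have hP2c : P2.card ≤ m * k := by
    apply pairs_card_snd (fun _ => Finset.univ.filter fun j => t1 * N < |(inner ℝ (τ' j) σ₀ : ℝ)|)
      (fun _ => hB2)
    intro p hp
    simpa using hp
  have hP3c : P3.card ≤ m * k := by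
    apply pairs_card_fst (fun j => Finset.univ.filter fun i => t2 * N < |(inner ℝ (τ i) (τ' j) : ℝ)|)
      hB3
    intro p hp
    simpa using hp
  set Bad := P1 ∪ P2 ∪ P3 with hBaddef
  have hBadc : Bad.card ≤ 3 * (m * k) := by
    calc Bad.card ≤ (P1 ∪ P2).card + P3.card := Finset.card_union_le _ _
      _ ≤ P1.card + P2.card + P3.card := by linarith [Finset.card_union_le P1 P2]
      _ ≤ 3 * (m * k) := by omega
  set G := Finset.univ.filter (fun p : Fin m × Fin m =>
    |(inner ℝ (σ p.1) (σ' p.2) : ℝ) / N - (inner ℝ σ₀ σ₀' : ℝ) / N|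
      ≤ 3 * ((m : ℝ) ^ (-(1 : ℝ) / 4) * 4 + Real.sqrt ε * 4)) with hGdef
  -- bound 2*t1 + t2 ≤ 3*(m^{-1/4}*4 + √ε*4)
  have hm14 : (m:ℝ) ^ ((1:ℝ)/4) ≤ sk := by
    have h1 : Real.sqrt m ≤ (k:ℝ) := Nat.le_ceil _
    have h2 : Real.sqrt (Real.sqrt m) ≤ sk := Real.sqrt_le_sqrt h1
    have h3 : Real.sqrt (Real.sqrt m) = (m:ℝ) ^ ((1:ℝ)/4) := by
      rw [Real.sqrt_eq_rpow, Real.sqrt_eq_rpow, ← Real.rpow_mul (Nat.cast_nonneg m)]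
      norm_num
    rwa [h3] at h2
  have hm14pos : (0:ℝ) < (m:ℝ) ^ ((1:ℝ)/4) := Real.rpow_pos_of_pos hmpos _
  have hinv : 1 / sk ≤ (m:ℝ) ^ (-(1:ℝ)/4) := by
    have : (m:ℝ) ^ (-(1:ℝ)/4) = ((m:ℝ) ^ ((1:ℝ)/4))⁻¹ := by
      rw [← Real.rpow_neg (Nat.cast_nonneg m)]
      norm_num
    rw [this, one_div]
    exact inv_anti₀ hm14pos hm14
  have hbound : 2 * t1 + t2 ≤ 3 * ((m : ℝ) ^ (-(1 : ℝ) / 4) * 4 + se * 4) := by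
    have : 2 * t1 + t2 = 4 * se + 8 * (1 / sk) := by rw [ht1def, ht2def]; ring
    rw [this]
    nlinarith [hinv, hse0, Real.rpow_nonneg (Nat.cast_nonneg m : (0:ℝ) ≤ m) (-(1:ℝ)/4)]
  -- every pair not in Bad is in G
  have hsub : (Finset.univ : Finset (Fin m × Fin m)) ⊆ G ∪ Bad := by
    intro p _
    rw [Finset.mem_union]
    by_cases hp : p ∈ Bad
    · exact Or.inr hp
    · left
      rw [hBaddef, Finset.mem_union, Finset.mem_union, hP1def, hP2def, hP3def] at hp
      push_neg at hp
      simp only [Finset.mem_filter, Finset.mem_univ, true_and, not_lt] at hp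
      obtain ⟨⟨ha, hb⟩, hc⟩ := hp
      rw [hGdef, Finset.mem_filter]
      refine ⟨Finset.mem_univ _, ?_⟩
      have hdec : (inner ℝ (σ p.1) (σ' p.2) : ℝ) - inner ℝ σ₀ σ₀'
          = (inner ℝ (τ p.1) σ₀' : ℝ) + (inner ℝ (τ p.1) (τ' p.2) : ℝ) + (inner ℝ (τ' p.2) σ₀ : ℝ) := by
        simp only [hτdef, hτ'def, inner_sub_left, inner_sub_right]
        rw [real_inner_comm (σ' p.2) σ₀, real_inner_comm σ₀' σ₀]
        ring
      have habs : |(inner ℝ (σ p.1) (σ' p.2) : ℝ) - inner ℝ σ₀ σ₀'| ≤ (2 * t1 + t2) * N := by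
        rw [hdec]
        calc |(inner ℝ (τ p.1) σ₀' : ℝ) + (inner ℝ (τ p.1) (τ' p.2) : ℝ) + (inner ℝ (τ' p.2) σ₀ : ℝ)|
            ≤ |(inner ℝ (τ p.1) σ₀' : ℝ)| + |(inner ℝ (τ p.1) (τ' p.2) : ℝ)| + |(inner ℝ (τ' p.2) σ₀ : ℝ)| :=
              (abs_add_le _ _).trans (by linarith [abs_add_le (inner ℝ (τ p.1) σ₀' : ℝ) (inner ℝ (τ p.1) (τ' p.2) : ℝ)])
          _ ≤ t1 * N + t2 * N + t1 * N := by
              linarith [ha, hb, hc]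
          _ = (2 * t1 + t2) * N := by ring
      have : |(inner ℝ (σ p.1) (σ' p.2) : ℝ) / N - (inner ℝ σ₀ σ₀' : ℝ) / N| ≤ 2 * t1 + t2 := by
        rw [div_sub_div_same, abs_div, abs_of_pos hNpos, div_le_iff₀ hNpos]
        linarith [habs]
      calc |(inner ℝ (σ p.1) (σ' p.2) : ℝ) / N - (inner ℝ σ₀ σ₀' : ℝ) / N| ≤ 2 * t1 + t2 := this
        _ ≤ 3 * ((m : ℝ) ^ (-(1 : ℝ) / 4) * 4 + Real.sqrt ε * 4) := by
            rw [← hsedef]; exact hbound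
  have hcard : m * m ≤ G.card + Bad.card := by
    calc m * m = (Finset.univ : Finset (Fin m × Fin m)).card := by
          simp [Finset.card_univ]
      _ ≤ (G ∪ Bad).card := Finset.card_le_card hsub
      _ ≤ G.card + Bad.card := Finset.card_union_le _ _
  have hset : {p : Fin m × Fin m |
      |(inner ℝ (σ p.1) (σ' p.2) : ℝ) / N - (inner ℝ σ₀ σ₀' : ℝ) / N|
        ≤ 3 * ((m : ℝ) ^ (-(1 : ℝ) / 4) * 4 + Real.sqrt ε * 4)} = ↑G := by
    ext p
    simp [hGdef]
  rw [hset, Set.ncard_coe_finset]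
  have hG : ((m:ℝ) * m - 3 * (m * k) : ℝ) ≤ G.card := by
    have h1 : ((m * m : ℕ) : ℝ) ≤ ((G.card + Bad.card : ℕ) : ℝ) := by exact_mod_cast hcard
    have h2 : ((Bad.card : ℕ) : ℝ) ≤ ((3 * (m * k) : ℕ) : ℝ) := by exact_mod_cast hBadc
    push_cast at h1 h2 ⊢
    linarith
  have heq : (1 - 3 * (k : ℝ) / m) * (m : ℝ) ^ 2 = (m:ℝ) * m - 3 * (m * k) := by
    field_simp
  rw [heq]
  exact hG
end
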